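/- If f(s) = a_0 + a_1 s + ... + a_n s^n is a Hurwitz stable real polynomial with positive coefficients, then there exists ε > 0 such that for every a_{n+1} ∈ (0, ε) the polynomial F(s) = f(s) + a_{n+1} s^{n+1} is Hurwitz stable. -/

import Mathlib

/-- A real polynomial is Hurwitz stable if all its complex zeros have negative real parts. -/
def HurwitzStable (f : Polynomial ℝ) : Prop :=
  ∀ z : ℂ, Polynomial.aeval z f = 0 → z.re < 0

theorem stable_add_small_leading (n : ℕ) (hn : 1 ≤ n) (a : ℕ → ℝ) (ha : ∀ i ≤ n, 0 < a i)
    (hf : HurwitzStable (∑ i ∈ Finset.range (n + 1), Polynomial.C (a i) * Polynomial.X ^ i)) :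
    ∃ ε > 0, ∀ c : ℝ, 0 < c → c < ε →
      HurwitzStable ((∑ i ∈ Finset.range (n + 1), Polynomial.C (a i) * Polynomial.X ^ i) +
        Polynomial.C c * Polynomial.X ^ (n + 1)) := by
  classical
  obtain ⟨k, rfl⟩ : ∃ k, n = k + 1 := ⟨n - 1, (Nat.succ_pred_eq_of_pos hn).symm⟩
  have haeval : ∀ z : ℂ, Polynomial.aeval z
      (∑ i ∈ Finset.range (k + 1 + 1), Polynomial.C (a i) * Polynomial.X ^ i)
      = ∑ i ∈ Finset.range (k + 1 + 1), (a i : ℂ) * z ^ i := by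
    intro z
    simp [Polynomial.aeval_def, Polynomial.eval₂_finset_sum]
  set A : ℝ := ∑ i ∈ Finset.range (k + 1), a i with hA
  have hanpos : 0 < a (k + 1) := ha _ le_rfl
  have hAnn : 0 ≤ A := Finset.sum_nonneg fun i hi =>
    (ha i (le_of_lt (Finset.mem_range.mp hi))).le
  set R : ℝ := max 1 (A / a (k + 1) + 1) with hR
  have hR1 : 1 ≤ R := le_max_left _ _
  have hR0 : 0 < R := lt_of_lt_of_le one_pos hR1
  set K : Set ℂ := Metric.closedBall 0 R ∩ {z | 0 ≤ z.re} with hK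
  have hKc : IsCompact K := (isCompact_closedBall 0 R).inter_right
    (isClosed_le continuous_const Complex.continuous_re)
  have hKne : K.Nonempty := ⟨0, by simp [hK, hR0.le]⟩
  have hcont : ContinuousOn
      (fun z : ℂ => ‖∑ i ∈ Finset.range (k + 1 + 1), (a i : ℂ) * z ^ i‖) K :=
    (continuous_norm.comp (continuous_finset_sum _ fun i _ =>
      continuous_const.mul (continuous_pow i))).continuousOn
  obtain ⟨z₀, hz₀K, hz₀min⟩ := hKc.exists_isMinOn hKne hcont
  set m : ℝ := ‖∑ i ∈ Finset.range (k + 1 + 1), (a i : ℂ) * z₀ ^ i‖ with hm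
  have hmpos : 0 < m := by
    rw [hm]
    apply norm_pos_iff.mpr
    intro h0
    have := hf z₀ (by rw [haeval]; exact h0)
    exact absurd this (not_lt.mpr hz₀K.2)
  have hRn : 0 < R ^ (k + 1 + 1) := pow_pos hR0 _
  refine ⟨m / (2 * R ^ (k + 1 + 1)), by positivity, ?_⟩
  intro c hc hcε z hz0
  by_contra hre
  push_neg at hre
  have hFz : (∑ i ∈ Finset.range (k + 1 + 1), (a i : ℂ) * z ^ i) + (c : ℂ) * z ^ (k + 1 + 1) = 0 := by
    have h := hz0
    rw [map_add] at h
    rw [haeval] at h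
    simpa using h
  by_cases hzR : ‖z‖ ≤ R
  · -- small case
    have hzK : z ∈ K := ⟨Metric.mem_closedBall.mpr (by simpa using hzR), hre⟩
    have hm_le : m ≤ ‖∑ i ∈ Finset.range (k + 1 + 1), (a i : ℂ) * z ^ i‖ :=
      hz₀min hzK
    have heq : (∑ i ∈ Finset.range (k + 1 + 1), (a i : ℂ) * z ^ i)
        = -((c : ℂ) * z ^ (k + 1 + 1)) := by linear_combination hFz
    rw [heq] at hm_le
    have habs : ‖-((c : ℂ) * z ^ (k + 1 + 1))‖
        = c * ‖z‖ ^ (k + 1 + 1) := by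
      simp [norm_mul, norm_pow, abs_of_pos hc]
    rw [habs] at hm_le
    have hle : c * ‖z‖ ^ (k + 1 + 1) ≤ c * R ^ (k + 1 + 1) := by
      have := pow_le_pow_left₀ (norm_nonneg z) hzR (k + 1 + 1)
      nlinarith
    have h3 : m / (2 * R ^ (k + 1 + 1)) * R ^ (k + 1 + 1) = m / 2 := by
      field_simp
    have h4 : c * R ^ (k + 1 + 1) < m / 2 := by
      calc c * R ^ (k + 1 + 1) < m / (2 * R ^ (k + 1 + 1)) * R ^ (k + 1 + 1) :=
            mul_lt_mul_of_pos_right hcε hRn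
        _ = m / 2 := h3
    linarith
  · -- large case
    push_neg at hzR
    set r : ℝ := ‖z‖ with hr
    have hr1 : 1 ≤ r := le_trans hR1 hzR.le
    have hr0 : 0 < r := lt_of_lt_of_le one_pos hr1
    -- split the sum
    have hsplit : (∑ i ∈ Finset.range (k + 1 + 1), (a i : ℂ) * z ^ i)
        = (∑ i ∈ Finset.range (k + 1), (a i : ℂ) * z ^ i) + (a (k + 1) : ℂ) * z ^ (k + 1) :=
      Finset.sum_range_succ _ _
    have hmain : (c : ℂ) * z ^ (k + 1 + 1) + (a (k + 1) : ℂ) * z ^ (k + 1)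
        = -(∑ i ∈ Finset.range (k + 1), (a i : ℂ) * z ^ i) := by
      rw [hsplit] at hFz
      linear_combination hFz
    -- lower bound on the left
    have hfact : (c : ℂ) * z ^ (k + 1 + 1) + (a (k + 1) : ℂ) * z ^ (k + 1)
        = z ^ (k + 1) * ((c : ℂ) * z + (a (k + 1) : ℂ)) := by ring
    have hlow : a (k + 1) * r ^ (k + 1)
        ≤ ‖(c : ℂ) * z ^ (k + 1 + 1) + (a (k + 1) : ℂ) * z ^ (k + 1)‖ := by
      rw [hfact, norm_mul, norm_pow]
      have h1 : a (k + 1) ≤ ‖(c : ℂ) * z + (a (k + 1) : ℂ)‖ := by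
        have hre' : a (k + 1) ≤ ((c : ℂ) * z + (a (k + 1) : ℂ)).re := by
          simp only [Complex.add_re, Complex.mul_re, Complex.ofReal_re, Complex.ofReal_im]
          nlinarith
        exact le_trans hre' (Complex.re_le_norm _)
      have h2 : (0:ℝ) ≤ r ^ (k + 1) := by positivity
      calc a (k + 1) * r ^ (k + 1) = r ^ (k + 1) * a (k + 1) := by ring
        _ ≤ r ^ (k + 1) * ‖(c : ℂ) * z + (a (k + 1) : ℂ)‖ := by
            exact mul_le_mul_of_nonneg_left h1 h2
    -- upper bound on the right
    have hup : ‖∑ i ∈ Finset.range (k + 1), (a i : ℂ) * z ^ i‖ ≤ A * r ^ k := by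
      calc ‖∑ i ∈ Finset.range (k + 1), (a i : ℂ) * z ^ i‖
          ≤ ∑ i ∈ Finset.range (k + 1), ‖(a i : ℂ) * z ^ i‖ :=
            norm_sum_le _ _
        _ ≤ ∑ i ∈ Finset.range (k + 1), a i * r ^ k := by
            apply Finset.sum_le_sum
            intro i hi
            have hai : 0 < a i := ha i (Finset.mem_range.mp hi).le
            rw [norm_mul, norm_pow, Complex.norm_real, Real.norm_eq_abs, abs_of_pos hai]
            have hik : i ≤ k := Nat.lt_succ_iff.mp (Finset.mem_range.mp hi)
            have := pow_le_pow_right₀ hr1 hik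
            nlinarith
        _ = A * r ^ k := by rw [hA, Finset.sum_mul]
    have hcomb : a (k + 1) * r ^ (k + 1) ≤ A * r ^ k := by
      calc a (k + 1) * r ^ (k + 1) ≤ _ := hlow
        _ = ‖-(∑ i ∈ Finset.range (k + 1), (a i : ℂ) * z ^ i)‖ := by rw [hmain]
        _ = ‖∑ i ∈ Finset.range (k + 1), (a i : ℂ) * z ^ i‖ := norm_neg _
        _ ≤ A * r ^ k := hup
    -- contradiction: r > R ≥ A / a(k+1) + 1
    have hRge : A / a (k + 1) + 1 ≤ R := le_max_right _ _
    have hrgt : A / a (k + 1) + 1 < r := lt_of_le_of_lt hRge hzR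
    have hrk : 0 < r ^ k := pow_pos hr0 k
    have hsucc : r ^ (k + 1) = r ^ k * r := pow_succ r k
    have hdiv : A < a (k + 1) * r := by
      have : A / a (k + 1) < r := by linarith
      calc A = a (k + 1) * (A / a (k + 1)) := by field_simp
        _ < a (k + 1) * r := by exact mul_lt_mul_of_pos_left this hanpos
    nlinarith
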